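/- Let E be a meet-semilattice with bottom ⊥ and X ⊆ E × Finset E. For every a ∈ E, the set M_a = {φ ∈ \hat{E}_X : φ(a) = true} is a compact open subset of \hat{E}_X. -/

import Mathlib

/-- The set of `X`-to-join characters of a meet-semilattice `E` with bottom. -/
def XtoJoinChars {E : Type*} [SemilatticeInf E] [OrderBot E]
    (X : Set (E × Finset E)) : Set (E → Bool) :=
  {φ | φ ⊥ = false ∧ (∀ x y : E, φ (x ⊓ y) = (φ x && φ y)) ∧ (∃ x : E, φ x = true) ∧
    ∀ p ∈ X, (φ p.1 = true ↔ ∃ f ∈ p.2, φ f = true)}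

/-- The basic set `M_a = {φ ∈ Ê_X : φ(a) = true}`. -/
def Mset {E : Type*} [SemilatticeInf E] [OrderBot E]
    (X : Set (E × Finset E)) (a : E) : Set (XtoJoinChars X) :=
  {φ | (φ : E → Bool) a = true}

private lemma continuous_finsetSup {E : Type*} (s : Finset E) :
    Continuous fun φ : E → Bool => s.sup φ := by
  classical
  induction s using Finset.induction_on with
  | empty => simpa using continuous_const
  | insert _ _ h ih =>
    simp only [Finset.sup_insert]
    exact (continuous_of_discreteTopology (f := fun p : Bool × Bool => p.1 ⊔ p.2)).comp
      ((continuous_apply _).prodMk ih)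

private lemma finsetSup_eq_true_iff {E : Type*} (s : Finset E) (φ : E → Bool) :
    s.sup φ = true ↔ ∃ f ∈ s, φ f = true := by
  constructor
  · intro h
    by_contra hc
    push_neg at hc
    have : s.sup φ = ⊥ := (Finset.sup_eq_bot_iff φ s).mpr fun f hf => by
      simpa using hc f hf
    simp [this] at h
  · rintro ⟨f, hf, hφ⟩
    have := Finset.le_sup (f := φ) hf
    rw [hφ] at this
    exact le_antisymm le_top this

/-- For every `a ∈ E`, the set `M_a` is a compact open subset of the
space `Ê_X` of `X`-to-join characters (with the subspace topology from the product
topology on `E → Bool`, `Bool` discrete). -/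
theorem statement5 {E : Type*} [SemilatticeInf E] [OrderBot E]
    (X : Set (E × Finset E)) (a : E) :
    IsCompact (Mset X a) ∧ IsOpen (Mset X a) := by
  classical
  constructor
  · -- compactness
    set S : Set (E → Bool) :=
      {φ | φ ⊥ = false} ∩ (⋂ x : E, ⋂ y : E, {φ | φ (x ⊓ y) = (φ x && φ y)}) ∩
        (⋂ p ∈ X, {φ : E → Bool | φ p.1 = p.2.sup φ}) ∩ {φ | φ a = true} with hS
    have hclosed : IsClosed S := by
      refine ((IsClosed.inter (IsClosed.inter ?_ ?_) ?_).inter ?_)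
      · exact isClosed_eq (continuous_apply _) continuous_const
      · refine isClosed_iInter fun x => isClosed_iInter fun y =>
          isClosed_eq (continuous_apply _) ?_
        exact (continuous_of_discreteTopology (f := fun p : Bool × Bool => p.1 && p.2)).comp
          (Continuous.prodMk (continuous_apply x) (continuous_apply y) :
            Continuous fun φ : E → Bool => (φ x, φ y))
      · exact isClosed_biInter fun p _ =>
          isClosed_eq (continuous_apply _) (continuous_finsetSup p.2)
      · exact isClosed_eq (continuous_apply _) continuous_const
    have hScompact : IsCompact S := hclosed.isCompact
    have himg : Subtype.val '' Mset X a = S := by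
      ext φ
      simp only [Set.mem_image, hS, Set.mem_inter_iff, Set.mem_iInter, Set.mem_setOf_eq]
      constructor
      · rintro ⟨⟨ψ, hψ⟩, hM, rfl⟩
        obtain ⟨h1, h2, _, h4⟩ := hψ
        refine ⟨⟨⟨h1, fun x y => h2 x y⟩, fun p hp => ?_⟩, hM⟩
        rw [Bool.eq_iff_iff]
        exact (h4 p hp).trans (finsetSup_eq_true_iff p.2 ψ).symm
      · rintro ⟨⟨⟨h1, h2⟩, h4⟩, hM⟩
        refine ⟨⟨φ, h1, h2, ⟨a, hM⟩, fun p hp => ?_⟩, hM, rfl⟩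
        rw [h4 p hp]
        exact finsetSup_eq_true_iff p.2 φ
    rw [(Topology.IsEmbedding.subtypeVal).isCompact_iff, himg]
    exact hScompact
  · -- openness
    have : Mset X a = (fun φ : XtoJoinChars X => (φ : E → Bool) a) ⁻¹' {true} := by
      ext φ; simp [Mset]
    rw [this]
    exact (((continuous_apply a).comp continuous_subtype_val)).isOpen_preimage _
      (isOpen_discrete _)
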